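/- Let R = GF(2)[c]/(c³) and S = R[[d]]. Then 1 + c + c² + d is a unit in S, and for every natural number i the coefficient of d^i in (1 + c)·(1 + c + c² + d)^{-1} equals: 1 + c² if i ≡ 0 (mod 4); 1 + c + c² if i ≡ 1 (mod 4); 1 if i ≡ 2 (mod 4); and 1 + c if i ≡ 3 (mod 4). -/

import Mathlib

open Polynomial PowerSeries

noncomputable section

/-- The ring `R = GF(2)[c] / (c³)`. -/
abbrev R2 : Type := AdjoinRoot (Polynomial.X ^ 3 : Polynomial (ZMod 2))

/-- The class of the variable `c` in `R = GF(2)[c] / (c³)`. -/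
def cR : R2 := AdjoinRoot.root _

/-- The power series ring `S = R[[d]]`. -/
abbrev S2 : Type := PowerSeries R2

/-- The image of `c` in `S = R[[d]]`. -/
def cS : S2 := PowerSeries.C cR

/-- The variable `d` of `S = R[[d]]`. -/
def dS : S2 := PowerSeries.X

/-- The coefficient of `c²` of an element of `R = GF(2)[c] / (c³)`,
computed via the unique representative polynomial of degree `< 3`. -/
def coefc2 (x : R2) : ZMod 2 :=
  (AdjoinRoot.modByMonicHom (Polynomial.monic_X_pow 3) x).coeff 2

lemma two_eq_zero_R2 : (2 : R2) = 0 := by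
  have h : (2 : R2) = algebraMap (ZMod 2) R2 2 := (map_ofNat _ 2).symm
  rw [h, show (2 : ZMod 2) = 0 from rfl, map_zero]

lemma cR_cube : cR ^ 3 = 0 := by
  have h : (AdjoinRoot.mk (Polynomial.X ^ 3 : Polynomial (ZMod 2)))
      (Polynomial.X ^ 3) = 0 := AdjoinRoot.mk_self
  rw [← h, map_pow]
  rfl

lemma one_add_cR_pow_four : (1 + cR) ^ 4 = 1 := by
  linear_combination (cR + 4) * cR_cube + (2 * cR + 3 * cR ^ 2) * two_eq_zero_R2

lemma one_add_cR_pow_mod (n : ℕ) : (1 + cR) ^ n = (1 + cR) ^ (n % 4) := by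
  conv_lhs => rw [← Nat.div_add_mod n 4]
  rw [pow_add, pow_mul, one_add_cR_pow_four, one_pow, one_mul]

theorem inverse_mul_coeffs :
    IsUnit (1 + cS + cS ^ 2 + dS) ∧
      ∀ i : ℕ,
        PowerSeries.coeff i ((1 + cS) * Ring.inverse (1 + cS + cS ^ 2 + dS)) =
          if i % 4 = 0 then 1 + cR ^ 2
          else if i % 4 = 1 then 1 + cR + cR ^ 2
          else if i % 4 = 2 then 1
          else 1 + cR := by
  have h2 := two_eq_zero_R2
  have h3 := cR_cube
  have hinvR : (1 + cR + cR ^ 2) * (1 + cR) = 1 := by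
    linear_combination h3 + (cR + cR ^ 2) * h2
  set f : S2 := PowerSeries.mk fun n => (1 + cR) ^ (n + 1) with hf
  have hrw : (1 + cS + cS ^ 2 + dS : S2) =
      PowerSeries.C (1 + cR + cR ^ 2) + PowerSeries.X := by
    simp only [cS, dS, map_add, map_one, map_pow]
  have hu : (1 + cS + cS ^ 2 + dS) * f = 1 := by
    rw [hrw]
    ext n
    rw [add_mul, map_add]
    cases n with
    | zero =>
      simp [f, PowerSeries.coeff_C_mul, hinvR]
    | succ n =>
      rw [PowerSeries.coeff_C_mul, PowerSeries.coeff_succ_X_mul]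
      simp only [f, PowerSeries.coeff_mk, PowerSeries.coeff_one, Nat.succ_ne_zero,
        if_false]
      linear_combination ((1 + cR) ^ (n + 1)) * hinvR + ((1 + cR) ^ (n + 1)) * h2
  have hw : IsUnit (1 + cS + cS ^ 2 + dS) := IsUnit.of_mul_eq_one _ hu
  refine ⟨hw, fun i => ?_⟩
  have hinv : f = Ring.inverse (1 + cS + cS ^ 2 + dS) := by
    have h1 : (1 + cS + cS ^ 2 + dS) * Ring.inverse (1 + cS + cS ^ 2 + dS) = 1 :=
      Ring.mul_inverse_cancel _ hw
    calc f = f * ((1 + cS + cS ^ 2 + dS) * Ring.inverse (1 + cS + cS ^ 2 + dS)) := by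
            rw [h1, mul_one]
      _ = ((1 + cS + cS ^ 2 + dS) * f) * Ring.inverse (1 + cS + cS ^ 2 + dS) := by ring
      _ = Ring.inverse (1 + cS + cS ^ 2 + dS) := by rw [hu, one_mul]
  rw [← hinv]
  have : (1 + cS : S2) = PowerSeries.C (1 + cR) := by simp [cS]
  rw [this, PowerSeries.coeff_C_mul]
  simp only [f, PowerSeries.coeff_mk]
  have key : (1 + cR) * (1 + cR) ^ (i + 1) = (1 + cR) ^ ((i + 2) % 4) := by
    rw [show (1 + cR) * (1 + cR) ^ (i + 1) = (1 + cR) ^ (i + 2) by ring,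
      one_add_cR_pow_mod]
  rw [key]
  have hcases : i % 4 = 0 ∨ i % 4 = 1 ∨ i % 4 = 2 ∨ i % 4 = 3 := by omega
  rcases hcases with h | h | h | h
  · rw [show (i + 2) % 4 = 2 by omega]
    simp only [h, if_true]
    linear_combination cR * h2
  · rw [show (i + 2) % 4 = 3 by omega]
    simp only [h]
    norm_num
    linear_combination h3 + (cR + cR ^ 2) * h2
  · rw [show (i + 2) % 4 = 0 by omega]
    simp only [h]
    norm_num
  · rw [show (i + 2) % 4 = 1 by omega]
    simp only [h]
    norm_num

end
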